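/- Let p, φ₁, φ₂ ∈ ℝ with ϱ = |(1 − e^{iφ₁} − e^{iφ₂}) − (1 − e^{iφ₁})(1 − e^{iφ₂})p|² and ς = |−e^{iφ₂} − (1 − e^{iφ₁})(1 − e^{iφ₂})p|². Then p·ϱ + (1 − p)·ς = 1. -/

import Mathlib

open Complex Real

theorem stmt_3 (p φ₁ φ₂ : ℝ) :
    p * Norm.norm ((1 - Complex.exp (Complex.I * φ₁) - Complex.exp (Complex.I * φ₂)) -
          (1 - Complex.exp (Complex.I * φ₁)) * (1 - Complex.exp (Complex.I * φ₂)) * (p : ℂ)) ^ 2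
      + (1 - p) * Norm.norm (-(Complex.exp (Complex.I * φ₂)) -
          (1 - Complex.exp (Complex.I * φ₁)) * (1 - Complex.exp (Complex.I * φ₂)) * (p : ℂ)) ^ 2
      = 1 := by
  have h1 : Complex.exp (Complex.I * φ₁) = Complex.cos φ₁ + Complex.sin φ₁ * Complex.I := by
    rw [mul_comm, Complex.exp_mul_I]
  have h2 : Complex.exp (Complex.I * φ₂) = Complex.cos φ₂ + Complex.sin φ₂ * Complex.I := by
    rw [mul_comm, Complex.exp_mul_I]
  have s1 : Real.sin φ₁ ^ 2 + Real.cos φ₁ ^ 2 = 1 := Real.sin_sq_add_cos_sq φ₁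
  have s2 : Real.sin φ₂ ^ 2 + Real.cos φ₂ ^ 2 = 1 := Real.sin_sq_add_cos_sq φ₂
  rw [Complex.sq_norm, Complex.sq_norm, h1, h2]
  simp [Complex.normSq_apply, Complex.cos_ofReal_re, Complex.sin_ofReal_re]
  have e1 : Real.sin φ₁ ^ 2 = 1 - Real.cos φ₁ ^ 2 := by linarith
  have e2 : Real.sin φ₂ ^ 2 = 1 - Real.cos φ₂ ^ 2 := by linarith
  ring_nf
  rw [e1, e2]
  ring
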